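/- For every r ∈ [1,∞) and every cut-off c > 0, the OSPA trajectory distance satisfies the triangle inequality: for all trajectories u, v, t on the time window 𝕂, d_T^{(c,r)}(u,v) ≤ d_T^{(c,r)}(u,t) + d_T^{(c,r)}(t,v). -/

import Mathlib

open scoped BigOperators

/-- A trajectory on the time window `{1,…,K}` (modeled as `Fin K`): a domain together
with a state map (values outside the domain are irrelevant). -/
structure Traj (K : ℕ) (X : Type*) where
  dom : Finset (Fin K)
  toFun : Fin K → X

/-- Per-time cost `e_{u,v}(k)` with base metric cut off at `c`. -/
noncomputable def ecost {K : ℕ} {X : Type*} [MetricSpace X] (c : ℝ) (u v : Traj K X)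
    (k : Fin K) : ℝ :=
  if k ∈ u.dom ∩ v.dom then min (dist (u.toFun k) (v.toFun k)) c
  else if k ∈ u.dom ∪ v.dom then c
  else 0

/-- OSPA trajectory distance of order `r` and cut-off `c`. -/
noncomputable def dT {K : ℕ} {X : Type*} [MetricSpace X] (c r : ℝ) (u v : Traj K X) : ℝ :=
  if u.dom ∪ v.dom = ∅ then 0
  else ((∑ k ∈ u.dom ∪ v.dom, ecost c u v k ^ r) / ((u.dom ∪ v.dom).card : ℝ)) ^ (1 / r)

lemma min_add_min (a b c : ℝ) (ha : 0 ≤ a) (hb : 0 ≤ b) (hc : 0 ≤ c) :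
    min (a + b) c ≤ min a c + min b c := by
  rcases le_total a c with h1 | h1 <;> rcases le_total b c with h2 | h2
  · rw [min_eq_left h1, min_eq_left h2]; exact min_le_left _ _
  · rw [min_eq_left h1, min_eq_right h2]; linarith [min_le_right (a + b) c]
  · rw [min_eq_right h1, min_eq_left h2]; linarith [min_le_right (a + b) c]
  · rw [min_eq_right h1, min_eq_right h2]; linarith [min_le_right (a + b) c]

section lemmas
variable {K : ℕ} {X : Type*} [MetricSpace X] {c r : ℝ}

lemma ecost_nonneg (hc : 0 < c) (u v : Traj K X) (k : Fin K) : 0 ≤ ecost c u v k := by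
  unfold ecost
  split_ifs
  · exact le_min dist_nonneg hc.le
  · exact hc.le
  · exact le_rfl

lemma ecost_le (hc : 0 < c) (u v : Traj K X) (k : Fin K) : ecost c u v k ≤ c := by
  unfold ecost
  split_ifs
  · exact min_le_right _ _
  · exact le_rfl
  · exact hc.le

lemma ecost_comm (u v : Traj K X) (k : Fin K) : ecost c u v k = ecost c v u k := by
  unfold ecost
  rw [Finset.inter_comm, Finset.union_comm, dist_comm]

lemma ecost_triangle (hc : 0 < c) (u v t : Traj K X) (k : Fin K) :
    ecost c u v k ≤ ecost c u t k + ecost c t v k := by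
  have hmin : ∀ y z : X, (0:ℝ) ≤ min (dist y z) c := fun y z => le_min dist_nonneg hc.le
  by_cases hu : k ∈ u.dom <;> by_cases hv : k ∈ v.dom <;> by_cases ht : k ∈ t.dom <;>
    simp only [ecost, Finset.mem_inter, Finset.mem_union, hu, hv, ht, true_and, and_true,
      false_and, and_false, if_true, if_false, true_or, or_true, false_or, or_false,
      not_false_iff, if_neg, not_true]
  · calc min (dist (u.toFun k) (v.toFun k)) c
        ≤ min (dist (u.toFun k) (t.toFun k) + dist (t.toFun k) (v.toFun k)) c :=
          min_le_min (dist_triangle _ _ _) le_rfl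
      _ ≤ _ := min_add_min _ _ _ dist_nonneg dist_nonneg hc.le
  · linarith [min_le_right (dist (u.toFun k) (v.toFun k)) c, hmin (u.toFun k) (v.toFun k)]
  · linarith [hmin (u.toFun k) (t.toFun k)]
  · linarith
  · linarith [hmin (t.toFun k) (v.toFun k)]
  · linarith
  · linarith
  · linarith

lemma dT_comm (u v : Traj K X) : dT c r u v = dT c r v u := by
  unfold dT
  rw [Finset.union_comm u.dom v.dom,
    Finset.sum_congr rfl (fun k _ => by rw [ecost_comm (c := c) u v k])]

lemma dT_nonneg (hc : 0 < c) (u v : Traj K X) : 0 ≤ dT c r u v := by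
  unfold dT
  split_ifs
  · exact le_rfl
  · exact Real.rpow_nonneg (div_nonneg
      (Finset.sum_nonneg fun k _ => Real.rpow_nonneg (ecost_nonneg hc u v k) r)
      (Nat.cast_nonneg _)) _

lemma dT_lower (hc : 0 < c) (hr : 1 ≤ r) (w z : Traj K X) {A : Finset (Fin K)}
    (hzA : z.dom ⊆ A) (hA : A.Nonempty) :
    ((∑ k ∈ A, ecost c w z k ^ r) / (A.card : ℝ)) ^ (1 / r) ≤ dT c r w z := by
  have hr0 : (0:ℝ) < r := lt_of_lt_of_le one_pos hr
  set B := w.dom ∪ z.dom with hBdef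
  have hzero : ∀ k : Fin K, k ∉ B → ecost c w z k = 0 := by
    intro k hkB
    rw [ecost, if_neg, if_neg]
    · exact hkB
    · intro hmem
      exact hkB (Finset.mem_union_left _ (Finset.mem_inter.mp hmem).1)
  by_cases hB : B = ∅
  · have h0 : ∀ k ∈ A, ecost c w z k ^ r = 0 := by
      intro k hk
      rw [hzero k (by rw [hB]; exact Finset.notMem_empty k), Real.zero_rpow hr0.ne']
    rw [Finset.sum_eq_zero h0, zero_div, Real.zero_rpow (by positivity)]
    unfold dT
    rw [← hBdef, if_pos hB]
  · unfold dT
    rw [← hBdef, if_neg hB]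
    apply Real.rpow_le_rpow
    · exact div_nonneg (Finset.sum_nonneg fun k _ =>
        Real.rpow_nonneg (ecost_nonneg hc w z k) r) (Nat.cast_nonneg _)
    swap
    · positivity
    have hAcard : (0:ℝ) < (A.card : ℝ) := by
      exact_mod_cast Finset.card_pos.mpr hA
    have hBcard : (0:ℝ) < (B.card : ℝ) := by
      exact_mod_cast Finset.card_pos.mpr (Finset.nonempty_iff_ne_empty.mpr hB)
    set S := ∑ k ∈ A, ecost c w z k ^ r with hS
    have hSAB : S = ∑ k ∈ B ∩ A, ecost c w z k ^ r := by
      rw [hS, Finset.inter_comm]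
      refine (Finset.sum_subset Finset.inter_subset_left ?_).symm
      intro k hkA hk
      have hkB : k ∉ B := fun h => hk (Finset.mem_inter.mpr ⟨hkA, h⟩)
      rw [hzero k hkB, Real.zero_rpow hr0.ne']
    have hdiff : ∀ k ∈ B \ A, ecost c w z k ^ r = c ^ r := by
      intro k hk
      rcases Finset.mem_sdiff.mp hk with ⟨hkB, hkA⟩
      have hkz : k ∉ z.dom := fun h => hkA (hzA h)
      have : ecost c w z k = c := by
        rw [ecost, if_neg, if_pos hkB]
        intro hmem
        exact hkz (Finset.mem_inter.mp hmem).2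
      rw [this]
    have hBsum : ∑ k ∈ B, ecost c w z k ^ r
        = S + ((B \ A).card : ℝ) * c ^ r := by
      rw [← Finset.sum_sdiff (Finset.inter_subset_left : B ∩ A ⊆ B),
        Finset.sdiff_inter_self_left, ← hSAB, Finset.sum_congr rfl hdiff,
        Finset.sum_const, nsmul_eq_mul, add_comm]
    have hSle : S ≤ (A.card : ℝ) * c ^ r := by
      calc S ≤ ∑ _k ∈ A, c ^ r :=
            Finset.sum_le_sum fun k _ => Real.rpow_le_rpow (ecost_nonneg hc w z k)
              (ecost_le hc w z k) hr0.le
        _ = (A.card : ℝ) * c ^ r := by rw [Finset.sum_const, nsmul_eq_mul]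
    have hS0 : 0 ≤ S := Finset.sum_nonneg fun k _ =>
      Real.rpow_nonneg (ecost_nonneg hc w z k) r
    have hcard : (B.card : ℝ) ≤ (A.card : ℝ) + ((B \ A).card : ℝ) := by
      have h1 : (B ∩ A).card + (B \ A).card = B.card :=
        Finset.card_inter_add_card_sdiff B A
      have h2 : (B ∩ A).card ≤ A.card := Finset.card_le_card Finset.inter_subset_right
      exact_mod_cast by omega
    have hm0 : (0:ℝ) ≤ ((B \ A).card : ℝ) := Nat.cast_nonneg _
    have hcpow : (0:ℝ) ≤ c ^ r := Real.rpow_nonneg hc.le r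
    rw [hBsum, div_le_div_iff₀ hAcard hBcard]
    nlinarith [mul_le_mul_of_nonneg_right hSle hm0]

end lemmas

/-- The OSPA trajectory distance satisfies the triangle inequality for every order
`r ∈ [1, ∞)` and cut-off `c > 0`. -/
theorem ospa_trajectory_triangle {K : ℕ} {X : Type*} [MetricSpace X] (hK : 1 ≤ K)
    {c r : ℝ} (hc : 0 < c) (hr : 1 ≤ r) (u v t : Traj K X) :
    dT c r u v ≤ dT c r u t + dT c r t v := by
  have hr0 : (0:ℝ) < r := lt_of_lt_of_le one_pos hr
  by_cases hA : u.dom ∪ v.dom = ∅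
  · rw [dT, if_pos hA]
    exact add_nonneg (dT_nonneg hc u t) (dT_nonneg hc t v)
  · have hAne : (u.dom ∪ v.dom).Nonempty := Finset.nonempty_iff_ne_empty.mpr hA
    have hAcard : (0:ℝ) < ((u.dom ∪ v.dom).card : ℝ) := by
      exact_mod_cast Finset.card_pos.mpr hAne
    have hnum : ∀ w z : Traj K X, (0:ℝ) ≤ ∑ k ∈ u.dom ∪ v.dom, ecost c w z k ^ r :=
      fun w z => Finset.sum_nonneg fun k _ => Real.rpow_nonneg (ecost_nonneg hc w z k) r
    have hstep : dT c r u v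
        ≤ ((∑ k ∈ u.dom ∪ v.dom, ecost c u t k ^ r) / ((u.dom ∪ v.dom).card : ℝ)) ^ (1 / r)
          + ((∑ k ∈ u.dom ∪ v.dom, ecost c t v k ^ r) / ((u.dom ∪ v.dom).card : ℝ)) ^ (1 / r) := by
      rw [dT, if_neg hA,
        Real.div_rpow (hnum u v) (Nat.cast_nonneg _),
        Real.div_rpow (hnum u t) (Nat.cast_nonneg _),
        Real.div_rpow (hnum t v) (Nat.cast_nonneg _), ← add_div]
      rw [div_le_div_iff_of_pos_right (by positivity)]
      calc (∑ k ∈ u.dom ∪ v.dom, ecost c u v k ^ r) ^ (1 / r)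
          ≤ (∑ k ∈ u.dom ∪ v.dom, (ecost c u t k + ecost c t v k) ^ r) ^ (1 / r) :=
            Real.rpow_le_rpow (hnum u v)
              (Finset.sum_le_sum fun k _ => Real.rpow_le_rpow (ecost_nonneg hc u v k)
                (ecost_triangle hc u v t k) hr0.le) (by positivity)
        _ ≤ _ := Real.Lp_add_le_of_nonneg _ hr
              (fun k _ => ecost_nonneg hc u t k) (fun k _ => ecost_nonneg hc t v k)
    refine hstep.trans (add_le_add ?_ ?_)
    · rw [show (∑ k ∈ u.dom ∪ v.dom, ecost c u t k ^ r)
          = ∑ k ∈ u.dom ∪ v.dom, ecost c t u k ^ r from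
        Finset.sum_congr rfl fun k _ => by rw [ecost_comm], dT_comm u t]
      exact dT_lower hc hr t u Finset.subset_union_left hAne
    · exact dT_lower hc hr t v Finset.subset_union_right hAne
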